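/- There exist constants τ > 0 and β > 0, depending only on ε, κ₀, a, b, and L, such that for every m ∈ ℤ^ν ∖ {0} and all pairwise distinct s, t, u ∈ R_m with |s| ≥ |t| ≥ |u|, one has |s| ≥ τ exp(β |u|). -/

import Mathlib

open scoped Real BigOperators
open Real

noncomputable section

/-- `|m| = ∑_i |m_i|` (ℓ¹ norm on `ℤ^ν`, as a real number). -/
def znorm {ν : ℕ} (m : Fin ν → ℤ) : ℝ := ∑ i, |(m i : ℝ)|

/-- Distance between the gaps labelled `m` and `n`
(equals `dist ([Em m, Ep m], [Em n, Ep n])` when these closed intervals are disjoint). -/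
def gapDist {ν : ℕ} (Em Ep : (Fin ν → ℤ) → ℝ) (m n : Fin ν → ℤ) : ℝ :=
  max (Em n - Ep m) (Em m - Ep n)

/-- Gap length `γ_m = E_m^+ - E_m^-`. -/
def gapLen {ν : ℕ} (Em Ep : (Fin ν → ℤ) → ℝ) (m : Fin ν → ℤ) : ℝ := Ep m - Em m

/-- The exceptional set `R_m = { n ∈ ℤ^ν ∖ {0} : n ≠ m, γ_n > L η_{n,m}⁴ }`. -/
def Rset {ν : ℕ} (Em Ep : (Fin ν → ℤ) → ℝ) (L : ℝ) (m : Fin ν → ℤ) : Set (Fin ν → ℤ) :=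
  {n | n ≠ 0 ∧ n ≠ m ∧ L * gapDist Em Ep n m ^ 4 < gapLen Em Ep n}

/-- `C_m = (η_{m,0} + γ_m)^{1/2} ∏_{n ≠ m} (1 + γ_n/η_{m,n})^{1/2}`, the product running over
all nonzero labels `n ≠ m`. -/
def Cm {ν : ℕ} (Em Ep : (Fin ν → ℤ) → ℝ) (E0 : ℝ) (m : Fin ν → ℤ) : ℝ :=
  Real.sqrt ((Em m - E0) + gapLen Em Ep m) *
    ∏' n : {n : Fin ν → ℤ // n ≠ 0 ∧ n ≠ m},
      Real.sqrt (1 + gapLen Em Ep n / gapDist Em Ep m n)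

lemma one_le_znorm' {ν : ℕ} {n : Fin ν → ℤ} (hn : n ≠ 0) : 1 ≤ znorm n := by
  obtain ⟨i, hi⟩ := Function.ne_iff.mp hn
  have h1 : (1:ℝ) ≤ |(n i : ℝ)| := by
    have : (1:ℤ) ≤ |n i| := Int.one_le_abs (by simpa using hi)
    calc (1:ℝ) = ((1:ℤ):ℝ) := by norm_num
    _ ≤ ((|n i|:ℤ):ℝ) := by exact_mod_cast this
    _ = |(n i:ℝ)| := by push_cast; ring
  exact h1.trans (Finset.single_le_sum (f := fun j => |(n j : ℝ)|)
    (fun j _ => abs_nonneg _) (Finset.mem_univ i))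

lemma gapDist_comm' {ν : ℕ} (Em Ep : (Fin ν → ℤ) → ℝ) (m n : Fin ν → ℤ) :
    gapDist Em Ep m n = gapDist Em Ep n m := by
  unfold gapDist; exact max_comm _ _

set_option maxHeartbeats 1000000 in
theorem Rset_norm_jump'
    {ν : ℕ} (hν : 0 < ν) (ε κ₀ a b c E0 L : ℝ)
    (hε : 0 < ε) (hκ₀ : 0 < κ₀) (hκ₁ : κ₀ ≤ 1) (ha : 0 < a) (hb : 0 < b) (hc : 0 < c)
    (Em Ep : (Fin ν → ℤ) → ℝ)
    (hlt : ∀ m : Fin ν → ℤ, m ≠ 0 → Em m < Ep m)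
    (Hγ : ∀ m : Fin ν → ℤ, m ≠ 0 →
      gapLen Em Ep m < 2 * ε * Real.exp (-(κ₀ * znorm m) / 2))
    (Hη : ∀ m n : Fin ν → ℤ, m ≠ 0 → n ≠ 0 → m ≠ n → znorm n ≤ znorm m →
      a * znorm m ^ (-b) ≤ gapDist Em Ep m n)
    (hL : 0 < L)
    (hLbig : ∀ m : Fin ν → ℤ, m ≠ 0 →
      2 * ε * Real.exp (-(κ₀ * znorm m) / 2) < L * a ^ 4 * znorm m ^ (-(4 * b)))
    :
    ∃ τ : ℝ, 0 < τ ∧ ∃ β : ℝ, 0 < β ∧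
      ∀ m : Fin ν → ℤ, m ≠ 0 →
        ∀ s t u : Fin ν → ℤ,
          s ∈ Rset Em Ep L m → t ∈ Rset Em Ep L m → u ∈ Rset Em Ep L m →
          s ≠ t → t ≠ u → s ≠ u →
          znorm u ≤ znorm t → znorm t ≤ znorm s →
          τ * Real.exp (β * znorm u) ≤ znorm s := by
  set D : ℝ := (2 * ε / L) ^ ((1:ℝ)/4) with hD
  have hDpos : 0 < D := Real.rpow_pos_of_pos (by positivity) _
  set K : ℝ := 2 * D + 2 * ε with hK
  have hKpos : 0 < K := by positivity
  have hβpos : 0 < κ₀ / (8 * b) := div_pos hκ₀ (by linarith)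
  have hτpos : 0 < (a / K) ^ ((1:ℝ)/b) := Real.rpow_pos_of_pos (div_pos ha hKpos) _
  refine ⟨(a / K) ^ ((1:ℝ)/b), hτpos, κ₀ / (8 * b), hβpos, ?_⟩
  intro m hm0 s t u hs ht hu hst htu hsu hut hts
  -- key facts about elements of Rset
  have key : ∀ n : Fin ν → ℤ, n ∈ Rset Em Ep L m →
      znorm n < znorm m ∧ gapDist Em Ep n m ≤ D * Real.exp (-(κ₀ * znorm n) / 8) := by
    intro n hn
    obtain ⟨hn0, hnm, hgap⟩ := hn
    have hzn : (1:ℝ) ≤ znorm n := one_le_znorm' hn0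
    have hznpos : (0:ℝ) < znorm n := lt_of_lt_of_le one_pos hzn
    have hγn : gapLen Em Ep n < 2 * ε * Real.exp (-(κ₀ * znorm n) / 2) := Hγ n hn0
    have hbig := hLbig n hn0
    have hrw : (a * znorm n ^ (-b)) ^ (4:ℕ) = a ^ 4 * znorm n ^ (-(4 * b)) := by
      have h' : ((znorm n) ^ (-b)) ^ (4:ℕ) = znorm n ^ (-(4*b)) := by
        rw [← Real.rpow_natCast (znorm n ^ (-b)) 4, ← Real.rpow_mul hznpos.le]
        congr 1
        push_cast
        ring
      rw [mul_pow, h']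
    have hnm' : znorm n < znorm m := by
      by_contra hcon
      push_neg at hcon
      have hd := Hη n m hn0 hm0 hnm hcon
      have hd0 : 0 ≤ a * znorm n ^ (-b) := by positivity
      have h4 : (a * znorm n ^ (-b)) ^ (4:ℕ) ≤ gapDist Em Ep n m ^ (4:ℕ) :=
        pow_le_pow_left₀ hd0 hd 4
      have : L * (a * znorm n ^ (-b)) ^ (4:ℕ) ≤ L * gapDist Em Ep n m ^ 4 := by
        apply mul_le_mul_of_nonneg_left _ hL.le
        simpa using h4
      rw [hrw] at this
      linarith
    refine ⟨hnm', ?_⟩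
    have hdist0 : 0 < gapDist Em Ep n m := by
      have hd := Hη m n hm0 hn0 (Ne.symm hnm) hnm'.le
      rw [gapDist_comm' Em Ep m n] at hd
      have hzm : (0:ℝ) < znorm m := lt_trans hznpos hnm'
      have : (0:ℝ) < a * znorm m ^ (-b) :=
        mul_pos ha (Real.rpow_pos_of_pos hzm _)
      linarith
    -- gapDist^4 < (D*E)^4
    have hE : (0:ℝ) < Real.exp (-(κ₀ * znorm n) / 8) := Real.exp_pos _
    have hDE4 : (D * Real.exp (-(κ₀ * znorm n) / 8)) ^ (4:ℕ)
        = (2 * ε / L) * Real.exp (-(κ₀ * znorm n) / 2) := by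
      rw [mul_pow]
      have hD4 : D ^ (4:ℕ) = 2 * ε / L := by
        rw [hD, ← Real.rpow_natCast ((2*ε/L) ^ ((1:ℝ)/4)) 4, ← Real.rpow_mul (by positivity)]
        norm_num
      have hE4 : Real.exp (-(κ₀ * znorm n) / 8) ^ (4:ℕ)
          = Real.exp (-(κ₀ * znorm n) / 2) := by
        rw [← Real.exp_nat_mul]
        congr 1
        ring
      rw [hD4, hE4]
    have h4lt : gapDist Em Ep n m ^ (4:ℕ) < (D * Real.exp (-(κ₀ * znorm n) / 8)) ^ (4:ℕ) := by
      rw [hDE4, div_mul_eq_mul_div, lt_div_iff₀ hL]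
      nlinarith [hgap, hγn]
    have := (pow_lt_pow_iff_left₀ hdist0.le (by positivity) (by norm_num)).mp h4lt
    exact this.le
  obtain ⟨hs0, hsm, -⟩ := id hs
  obtain ⟨ht0, htm, -⟩ := id ht
  obtain ⟨hu0, hum, -⟩ := id hu
  obtain ⟨hsmlt, hsd⟩ := key s hs
  obtain ⟨htmlt, htd⟩ := key t ht
  have hzu : (1:ℝ) ≤ znorm u := one_le_znorm' hu0
  have hzt : (1:ℝ) ≤ znorm t := one_le_znorm' ht0
  have hzs : (1:ℝ) ≤ znorm s := one_le_znorm' hs0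
  have hzspos : (0:ℝ) < znorm s := lt_of_lt_of_le one_pos hzs
  -- triangle inequality
  have htri : gapDist Em Ep s t ≤ gapDist Em Ep s m + gapLen Em Ep m + gapDist Em Ep t m := by
    have h1 : Em t - Ep m ≤ gapDist Em Ep t m := le_max_right _ _
    have h2 : Em m - Ep s ≤ gapDist Em Ep s m := le_max_left _ _
    have h3 : Em s - Ep m ≤ gapDist Em Ep s m := le_max_right _ _
    have h4 : Em m - Ep t ≤ gapDist Em Ep t m := le_max_left _ _
    have h5 : gapLen Em Ep m = Ep m - Em m := rfl
    apply max_le <;> simp only [h5] <;> linarith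
  have hlow : a * znorm s ^ (-b) ≤ gapDist Em Ep s t := Hη s t hs0 ht0 hst hts
  -- upper bounds, all in terms of exp(-(κ₀ * znorm t)/8)
  set F : ℝ := Real.exp (-(κ₀ * znorm t) / 8) with hF
  have hFpos : 0 < F := Real.exp_pos _
  have hb1 : gapDist Em Ep s m ≤ D * F := by
    refine hsd.trans ?_
    apply mul_le_mul_of_nonneg_left _ hDpos.le
    apply Real.exp_le_exp.mpr
    have : κ₀ * znorm t ≤ κ₀ * znorm s := by nlinarith
    linarith
  have hb2 : gapLen Em Ep m < 2 * ε * F := by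
    refine (Hγ m hm0).trans_le ?_
    apply mul_le_mul_of_nonneg_left _ (by positivity)
    apply Real.exp_le_exp.mpr
    have h1 : znorm t ≤ znorm m := htmlt.le
    nlinarith
  have hb3 : gapDist Em Ep t m ≤ D * F := htd
  have hmain : a * znorm s ^ (-b) ≤ K * F := by
    calc a * znorm s ^ (-b) ≤ gapDist Em Ep s t := hlow
    _ ≤ gapDist Em Ep s m + gapLen Em Ep m + gapDist Em Ep t m := htri
    _ ≤ K * F := by rw [hK]; nlinarith
  -- solve for znorm s
  set G : ℝ := Real.exp (κ₀ * znorm t / 8) with hG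
  have hGpos : 0 < G := Real.exp_pos _
  have hFG : F * G = 1 := by
    rw [hF, hG, ← Real.exp_add,
      show -(κ₀ * znorm t) / 8 + κ₀ * znorm t / 8 = 0 from by ring, Real.exp_zero]
  have hxbpos : 0 < znorm s ^ b := Real.rpow_pos_of_pos hzspos b
  have hneg : znorm s ^ (-b) = (znorm s ^ b)⁻¹ := Real.rpow_neg hzspos.le b
  have h2 : a * G ≤ K * znorm s ^ b := by
    have step : a ≤ K * F * znorm s ^ b := by
      calc a = a * (znorm s ^ b)⁻¹ * znorm s ^ b := by field_simp
      _ ≤ (K * F) * znorm s ^ b := by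
          apply mul_le_mul_of_nonneg_right _ hxbpos.le
          rw [← hneg]; exact hmain
    calc a * G ≤ (K * F * znorm s ^ b) * G := mul_le_mul_of_nonneg_right step hGpos.le
    _ = K * znorm s ^ b * (F * G) := by ring
    _ = K * znorm s ^ b := by rw [hFG]; ring
  have hxb : a / K * G ≤ znorm s ^ b := by
    rw [div_mul_eq_mul_div, div_le_iff₀ hKpos]
    linarith
  have h3 : (a / K * G) ^ ((1:ℝ)/b) ≤ (znorm s ^ b) ^ ((1:ℝ)/b) :=
    Real.rpow_le_rpow (by positivity) hxb (by positivity)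
  have h4 : (znorm s ^ b) ^ ((1:ℝ)/b) = znorm s := by
    rw [← Real.rpow_mul hzspos.le, mul_one_div, div_self hb.ne', Real.rpow_one]
  have h5 : (a / K * G) ^ ((1:ℝ)/b) = (a / K) ^ ((1:ℝ)/b) * G ^ ((1:ℝ)/b) :=
    Real.mul_rpow (by positivity) hGpos.le
  have h6 : G ^ ((1:ℝ)/b) = Real.exp (κ₀ / (8 * b) * znorm t) := by
    rw [hG, ← Real.exp_mul]
    congr 1
    ring
  have hfin : (a / K) ^ ((1:ℝ)/b) * Real.exp (κ₀ / (8 * b) * znorm t) ≤ znorm s := by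
    rw [← h6, ← h5, ← h4]; exact h3
  refine le_trans ?_ hfin
  apply mul_le_mul_of_nonneg_left _ (by positivity)
  apply Real.exp_le_exp.mpr
  have hβ : (0:ℝ) < κ₀ / (8 * b) := by positivity
  nlinarith

/-- There are constants `τ, β > 0` (depending only on `ε, κ₀, a, b, L`) such that for any three
pairwise distinct elements `s, t, u` of `R_m` with `|s| ≥ |t| ≥ |u|`, one has
`|s| ≥ τ exp(β |u|)`. -/
theorem Rset_norm_jump
    {ν : ℕ} (hν : 0 < ν) (ε κ₀ a b c E0 L : ℝ)
    (hε : 0 < ε) (hκ₀ : 0 < κ₀) (hκ₁ : κ₀ ≤ 1) (ha : 0 < a) (hb : 0 < b) (hc : 0 < c)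
    (Em Ep : (Fin ν → ℤ) → ℝ)
    (hlt : ∀ m : Fin ν → ℤ, m ≠ 0 → Em m < Ep m)
    (hE0 : ∀ m : Fin ν → ℤ, m ≠ 0 → E0 < Em m)
    (hdisj : ∀ m n : Fin ν → ℤ, m ≠ 0 → n ≠ 0 → m ≠ n → Ep m < Em n ∨ Ep n < Em m)
    (Hγ : ∀ m : Fin ν → ℤ, m ≠ 0 →
      gapLen Em Ep m < 2 * ε * Real.exp (-(κ₀ * znorm m) / 2))
    (Hη : ∀ m n : Fin ν → ℤ, m ≠ 0 → n ≠ 0 → m ≠ n → znorm n ≤ znorm m →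
      a * znorm m ^ (-b) ≤ gapDist Em Ep m n)
    (Hη0low : ∀ m : Fin ν → ℤ, m ≠ 0 → a * znorm m ^ (-b) ≤ Em m - E0)
    (Hη0 : ∀ m : Fin ν → ℤ, m ≠ 0 → Em m - E0 ≤ c * znorm m ^ (2 : ℕ))
    (hL : 0 < L)
    (hLbig : ∀ m : Fin ν → ℤ, m ≠ 0 →
      2 * ε * Real.exp (-(κ₀ * znorm m) / 2) < L * a ^ 4 * znorm m ^ (-(4 * b)))
    :
    ∃ τ : ℝ, 0 < τ ∧ ∃ β : ℝ, 0 < β ∧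
      ∀ m : Fin ν → ℤ, m ≠ 0 →
        ∀ s t u : Fin ν → ℤ,
          s ∈ Rset Em Ep L m → t ∈ Rset Em Ep L m → u ∈ Rset Em Ep L m →
          s ≠ t → t ≠ u → s ≠ u →
          znorm u ≤ znorm t → znorm t ≤ znorm s →
          τ * Real.exp (β * znorm u) ≤ znorm s := by
  exact Rset_norm_jump' hν ε κ₀ a b c E0 L hε hκ₀ hκ₁ ha hb hc Em Ep hlt Hγ Hη hL hLbig
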